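/- Let h be nonnegative with h not identically 0, f ∈ SX(h,I) (h-convex), a, b ∈ I with a < b, f integrable on [a,b], and h integrable on [0,1]. Then (1/(2h(1/2)))·f((a+b)/2) ≤ (1/(b-a))∫ₐᵇ f(x) dx ≤ (f(a) + f(b))·∫₀¹ h(t) dt. -/

import Mathlib

open MeasureTheory

theorem hermite_hadamard_h_convex
    (h : ℝ → ℝ) (f : ℝ → ℝ) (a b : ℝ) (hab : a < b)
    (hh_nonneg : ∀ t ∈ Set.Icc (0:ℝ) 1, 0 ≤ h t)
    (hh_half : 0 < h (1 / 2))
    (hf_nonneg : ∀ y ∈ Set.Icc a b, 0 ≤ f y)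
    (hf_int : IntervalIntegrable f volume a b)
    (hh_int : IntervalIntegrable h volume 0 1)
    (hconv : ∀ y ∈ Set.Icc a b, ∀ z ∈ Set.Icc a b, ∀ t ∈ Set.Icc (0:ℝ) 1,
      f (t * y + (1 - t) * z) ≤ h t * f y + h (1 - t) * f z) :
    (1 / (2 * h (1 / 2))) * f ((a + b) / 2) ≤ (1 / (b - a)) * ∫ u in a..b, f u ∧
      (1 / (b - a)) * ∫ u in a..b, f u ≤ (f a + f b) * ∫ t in (0:ℝ)..1, h t := by
  have hba : (0:ℝ) < b - a := by linarith
  set I : ℝ := ∫ u in a..b, f u with hI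
  -- g1 t = f (t a + (1-t) b), g2 t = f ((1-t) a + t b)
  set g1 : ℝ → ℝ := fun t => f ((a - b) * t + b) with hg1
  set g2 : ℝ → ℝ := fun t => f ((b - a) * t + a) with hg2
  have hmem1 : ∀ t ∈ Set.Icc (0:ℝ) 1, (a - b) * t + b ∈ Set.Icc a b := by
    intro t ht
    constructor <;> nlinarith [ht.1, ht.2]
  have hmem2 : ∀ t ∈ Set.Icc (0:ℝ) 1, (b - a) * t + a ∈ Set.Icc a b := by
    intro t ht
    constructor <;> nlinarith [ht.1, ht.2]
  have hg1_int : IntervalIntegrable g1 volume 0 1 := by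
    have := (hf_int.comp_add_right b).comp_mul_left (c := a - b)
    simp only [sub_self, zero_div, div_self (by linarith : a - b ≠ 0)] at this
    exact this.symm
  have hg2_int : IntervalIntegrable g2 volume 0 1 := by
    have := (hf_int.symm.comp_add_right a).comp_mul_left (c := b - a)
    simp only [sub_self, zero_div, div_self (by linarith : b - a ≠ 0)] at this
    exact this.symm
  have h0 : a - b ≠ 0 := by linarith
  have h0' : b - a ≠ 0 := by linarith
  have hg1_val : (∫ t in (0:ℝ)..1, g1 t) = I / (b - a) := by
    rw [hg1]
    rw [intervalIntegral.integral_comp_mul_add f (by linarith : a - b ≠ 0) b]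
    simp only [mul_zero, zero_add, mul_one, sub_add_cancel, smul_eq_mul]
    rw [intervalIntegral.integral_symm a b, ← hI]
    field_simp
    ring
  have hg2_val : (∫ t in (0:ℝ)..1, g2 t) = I / (b - a) := by
    rw [hg2]
    rw [intervalIntegral.integral_comp_mul_add f (by linarith : b - a ≠ 0) a]
    simp only [mul_zero, zero_add, mul_one, sub_add_cancel, smul_eq_mul]
    field_simp
    exact hI.symm
  have hh1_int : IntervalIntegrable (fun t => h (1 - t)) volume 0 1 := by
    simpa using (hh_int.comp_sub_left 1).symm
  have hh1_val : (∫ t in (0:ℝ)..1, h (1 - t)) = ∫ t in (0:ℝ)..1, h t := by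
    rw [intervalIntegral.integral_comp_sub_left h 1]; norm_num
  constructor
  · -- left inequality
    have key : ∀ t ∈ Set.Icc (0:ℝ) 1, f ((a + b) / 2) ≤ h (1/2) * (g1 t + g2 t) := by
      intro t ht
      have := hconv _ (hmem1 t ht) _ (hmem2 t ht) (1/2) (by norm_num)
      have harg : (1/2 : ℝ) * ((a - b) * t + b) + (1 - 1/2) * ((b - a) * t + a)
          = (a + b) / 2 := by ring
      rw [harg] at this
      calc f ((a + b) / 2) ≤ h (1/2) * g1 t + h (1 - 1/2) * g2 t := this
        _ = h (1/2) * (g1 t + g2 t) := by norm_num; ring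
    have hint : (∫ t in (0:ℝ)..1, f ((a+b)/2)) ≤
        ∫ t in (0:ℝ)..1, h (1/2) * (g1 t + g2 t) := by
      apply intervalIntegral.integral_mono_on (by norm_num)
        (intervalIntegrable_const) (((hg1_int.add hg2_int).const_mul _)) key
    rw [intervalIntegral.integral_const, intervalIntegral.integral_const_mul,
      intervalIntegral.integral_add hg1_int hg2_int, hg1_val, hg2_val] at hint
    simp only [sub_zero, one_smul, one_mul, smul_eq_mul] at hint
    rw [div_mul_eq_mul_div, one_mul, div_le_iff₀ (by positivity), one_div]
    calc f ((a+b)/2) ≤ h (1/2) * (I / (b-a) + I / (b-a)) := hint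
      _ = (b - a)⁻¹ * I * (2 * h (1/2)) := by field_simp; ring
  · -- right inequality
    have key : ∀ t ∈ Set.Icc (0:ℝ) 1, g1 t ≤ h t * f a + h (1 - t) * f b := by
      intro t ht
      have := hconv a (Set.left_mem_Icc.2 hab.le) b (Set.right_mem_Icc.2 hab.le) t ht
      have harg : t * a + (1 - t) * b = (a - b) * t + b := by ring
      rw [harg] at this
      exact this
    have hint : (∫ t in (0:ℝ)..1, g1 t) ≤
        ∫ t in (0:ℝ)..1, (h t * f a + h (1 - t) * f b) := by
      apply intervalIntegral.integral_mono_on (by norm_num) hg1_int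
        ((hh_int.mul_const _).add (hh1_int.mul_const _)) key
    rw [hg1_val, intervalIntegral.integral_add (hh_int.mul_const _) (hh1_int.mul_const _),
      intervalIntegral.integral_mul_const, intervalIntegral.integral_mul_const,
      hh1_val] at hint
    rw [one_div, inv_mul_eq_div]
    calc I / (b - a) ≤ (∫ t in (0:ℝ)..1, h t) * f a + (∫ t in (0:ℝ)..1, h t) * f b := hint
      _ = (f a + f b) * ∫ t in (0:ℝ)..1, h t := by ring
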